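/- arXiv:quant-ph/0407247 — 2 statements merged into one kernel-verified Lean document; each statement's English description precedes it below -/
import Mathlib

section
/- For every n, m ∈ ℕ with m ≥ 1, the set B = { a/‖a‖₂ : a ∈ A, a ≠ 0 }, where A = { (a₁,…,aₙ) : aᵢ = h/(nm), h ∈ {0, ±1, …, ±nm} }, is a (1/m)-covering of the unit sphere of ℝⁿ with the Euclidean norm; that is, for every x ∈ ℝⁿ with ‖x‖₂ = 1 there exists b ∈ B with ‖x − b‖₂ ≤ 1/m. -/
/-- The grid `A` of points in `ℝⁿ` whose coordinates are integer multiples `h/(nm)`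
with `|h| ≤ nm`. -/
def gridA (n m : ℕ) : Set (EuclideanSpace ℝ (Fin n)) :=
  {a | ∀ i, ∃ h : ℤ, |h| ≤ (n * m : ℤ) ∧ a i = (h : ℝ) / (n * m)}

/-- the normalized nonzero grid points form a `1/m`-covering of the
unit sphere of `ℝⁿ` with the Euclidean norm. -/
theorem grid_covering (n m : ℕ) (hm : 1 ≤ m)
    (x : EuclideanSpace ℝ (Fin n)) (hx : ‖x‖ = 1) :
    ∃ a ∈ gridA n m, a ≠ 0 ∧ ‖x - ‖a‖⁻¹ • a‖ ≤ 1 / m := by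
  rcases Nat.eq_zero_or_pos n with rfl | hn
  · exfalso
    rw [EuclideanSpace.norm_eq] at hx
    simp at hx
  have hm0 : (0:ℝ) < m := by exact_mod_cast hm
  have hn0 : (0:ℝ) < n := by exact_mod_cast hn
  have hn1 : (1:ℝ) ≤ n := by exact_mod_cast hn
  have hm1 : (1:ℝ) ≤ m := by exact_mod_cast hm
  set N : ℝ := (n : ℝ) * m with hNdef
  have hN : 0 < N := by positivity
  set a : EuclideanSpace ℝ (Fin n) := WithLp.toLp 2 (fun i => (round (x i * N) : ℝ) / N) with ha
  -- each coordinate of x is at most 1 in absolute value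
  have hxsum : ∑ j, ‖x j‖ ^ 2 = 1 := by
    have h := (EuclideanSpace.norm_eq x).symm.trans hx
    rwa [Real.sqrt_eq_one] at h
  have hxi : ∀ i, |x i| ≤ 1 := by
    intro i
    rw [← sq_le_one_iff_abs_le_one]
    have heq : x i ^ 2 = ‖x i‖ ^ 2 := by rw [Real.norm_eq_abs, sq_abs]
    rw [heq, ← hxsum]
    exact Finset.single_le_sum (fun j _ => sq_nonneg ‖x j‖) (Finset.mem_univ i)
  -- grid membership
  have hmem : a ∈ gridA n m := by
    intro i
    refine ⟨round (x i * N), ?_, rfl⟩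
    have h1 : |x i * N| ≤ N := by
      rw [abs_mul, abs_of_pos hN]
      nlinarith [hxi i, abs_nonneg (x i)]
    have h2 : |(round (x i * N) : ℝ)| < N + 1 := by
      have := abs_sub_round (x i * N)
      calc |(round (x i * N) : ℝ)|
          ≤ |(round (x i * N) : ℝ) - x i * N| + |x i * N| := by
            simpa using abs_add_le ((round (x i * N) : ℝ) - x i * N) (x i * N)
        _ ≤ 1/2 + N := by rw [abs_sub_comm]; linarith
        _ < N + 1 := by linarith
    have h3 : (|round (x i * N)| : ℝ) < ((n * m : ℤ) : ℝ) + 1 := by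
      push_cast
      rw [hNdef] at h2
      push_cast at h2
      convert h2 using 2
    have : |round (x i * N)| < (n * m : ℤ) + 1 := by exact_mod_cast h3
    omega
  -- per-coordinate approximation
  have hcoord : ∀ i, |x i - a i| ≤ 1 / (2 * N) := by
    intro i
    have : x i - a i = (x i * N - round (x i * N)) / N := by
      rw [show a i = (round (x i * N) : ℝ) / N from rfl]
      field_simp
    rw [this, abs_div, abs_of_pos hN, div_le_div_iff₀ hN (by positivity)]
    have := abs_sub_round (x i * N)
    nlinarith [this]
  -- norm bound
  have hxa : ‖x - a‖ ≤ 1 / (2 * m) := by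
    rw [EuclideanSpace.norm_eq]
    have hsum : ∑ i, ‖(x - a) i‖ ^ 2 ≤ (1 / (2 * m)) ^ 2 := by
      calc ∑ i, ‖(x - a) i‖ ^ 2 ≤ ∑ _i : Fin n, (1 / (2 * N)) ^ 2 := by
            refine Finset.sum_le_sum fun i _ => ?_
            have hsub : (x - a) i = x i - a i := rfl
            rw [hsub, Real.norm_eq_abs]
            exact pow_le_pow_left₀ (abs_nonneg _) (hcoord i) 2
        _ = (n : ℝ) * (1 / (2 * N)) ^ 2 := by
            rw [Finset.sum_const, Finset.card_univ, Fintype.card_fin, nsmul_eq_mul]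
        _ ≤ (1 / (2 * m)) ^ 2 := by
            rw [hNdef, div_pow, div_pow, one_pow, mul_one_div,
              div_le_div_iff₀ (by positivity) (by positivity)]
            nlinarith [hn1, hm0, hn0]
    calc Real.sqrt (∑ i, ‖(x - a) i‖ ^ 2) ≤ Real.sqrt ((1 / (2 * m)) ^ 2) :=
          Real.sqrt_le_sqrt hsum
      _ = 1 / (2 * m) := Real.sqrt_sq (by positivity)
  -- a is nonzero
  have hna : (1:ℝ) - 1 / (2 * m) ≤ ‖a‖ := by
    have := norm_sub_norm_le x a
    rw [hx] at this
    linarith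
  have hhalf : 1 / (2 * (m:ℝ)) ≤ 1 / 2 := by
    rw [div_le_div_iff₀ (by positivity) (by norm_num)]
    linarith
  have hapos : 0 < ‖a‖ := by linarith
  have hane : a ≠ 0 := by
    intro h
    rw [h, norm_zero] at hapos
    exact lt_irrefl 0 hapos
  refine ⟨a, hmem, hane, ?_⟩
  -- final bound
  have hdist : ‖a - ‖a‖⁻¹ • a‖ = |‖a‖ - 1| := by
    have h1 : a - ‖a‖⁻¹ • a = (1 - ‖a‖⁻¹) • a := by
      rw [sub_smul, one_smul]
    rw [h1, norm_smul, Real.norm_eq_abs, ← abs_of_pos hapos, ← abs_mul,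
      abs_of_pos hapos]
    congr 1
    field_simp
  have habs : |‖a‖ - 1| ≤ ‖x - a‖ := by
    rw [← hx, norm_sub_rev x a]
    exact abs_norm_sub_norm_le a x
  calc ‖x - ‖a‖⁻¹ • a‖ = ‖(x - a) + (a - ‖a‖⁻¹ • a)‖ := by rw [sub_add_sub_cancel]
    _ ≤ ‖x - a‖ + ‖a - ‖a‖⁻¹ • a‖ := norm_add_le _ _
    _ = ‖x - a‖ + |‖a‖ - 1| := by rw [hdist]
    _ ≤ 1 / (2 * m) + 1 / (2 * m) := by
        have := le_trans habs hxa
        linarith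
    _ = 1 / m := by
        have hmne : (m:ℝ) ≠ 0 := ne_of_gt hm0
        field_simp
        ring
end

section
/- For every n, m ∈ ℕ with m ≥ 2 there exist N ≤ (2nm+1)ⁿ and a linear operator I : ℓ₂ⁿ(ℝ) → ℓ_∞^N(ℝ) such that ‖I(x)‖_∞ ≤ ‖x‖₂ and ‖x‖₂ ≤ (m/(m−1))‖I(x)‖_∞ for all x ∈ ℝⁿ. -/
open Finset

set_option maxHeartbeats 1000000 in
/-- for `m ≥ 2` there are `N ≤ (2nm+1)ⁿ` and a linear operator
`I : ℓ₂ⁿ(ℝ) → ℓ_∞^N(ℝ)` with `‖I x‖_∞ ≤ ‖x‖₂` and `‖x‖₂ ≤ (m/(m−1))‖I x‖_∞`. -/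
theorem exists_embedding_into_linf (n m : ℕ) (hm : 2 ≤ m) :
    ∃ N : ℕ, N ≤ (2 * n * m + 1) ^ n ∧
      ∃ I : EuclideanSpace ℝ (Fin n) →ₗ[ℝ] (Fin N → ℝ),
        ∀ x : EuclideanSpace ℝ (Fin n),
          ‖I x‖ ≤ ‖x‖ ∧ ‖x‖ ≤ (m / (m - 1) : ℝ) * ‖I x‖ := by
  classical
  have hm2R : (2:ℝ) ≤ (m:ℝ) := by exact_mod_cast hm
  rcases Nat.eq_zero_or_pos n with hn | hn
  · subst hn
    refine ⟨0, Nat.zero_le _, 0, fun x => ?_⟩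
    have hx : x = 0 := Subsingleton.elim x 0
    have hx0 : ‖x‖ = 0 := by rw [hx]; exact norm_zero
    constructor
    · simp [hx0]
    · rw [hx0]
      exact mul_nonneg (div_nonneg (by linarith) (by linarith)) (norm_nonneg _)
  · -- main case
    set M : ℕ := n * m with hMdef
    have hM1 : 1 ≤ M := Nat.one_le_iff_ne_zero.mpr (by positivity)
    set K : ℕ := 2 * M + 1 with hKdef
    have hcard : Fintype.card (Fin n → Fin K) = K ^ n := by
      simp [Fintype.card_fun]
    let e : (Fin n → Fin K) ≃ Fin (K ^ n) := Fintype.equivFinOfCardEq hcard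
    -- grid points
    let g : (Fin n → Fin K) → EuclideanSpace ℝ (Fin n) :=
      fun j => WithLp.toLp 2 (fun i => ((j i : ℝ) - M) / M : Fin n → ℝ)
    let u : (Fin n → Fin K) → EuclideanSpace ℝ (Fin n) :=
      fun j => if g j = 0 then 0 else ‖g j‖⁻¹ • g j
    have hu : ∀ j, ‖u j‖ ≤ 1 := by
      intro j
      by_cases h : g j = 0
      · simp [u, h]
      · simp only [u, if_neg h]
        rw [norm_smul, norm_inv, norm_norm,
          inv_mul_cancel₀ (norm_ne_zero_iff.mpr h)]
    let I : EuclideanSpace ℝ (Fin n) →ₗ[ℝ] Fin (K ^ n) → ℝ :=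
      LinearMap.pi fun k => (innerSL ℝ (u (e.symm k))).toLinearMap
    have hIapp : ∀ x k, I x k = inner ℝ (u (e.symm k)) x := fun x k => rfl
    refine ⟨K ^ n, by rw [hKdef, hMdef]; ring_nf; exact le_rfl, I, fun x => ?_⟩
    constructor
    · -- ‖I x‖ ≤ ‖x‖
      rw [pi_norm_le_iff_of_nonneg (norm_nonneg x)]
      intro k
      rw [hIapp]
      calc ‖(inner ℝ (u (e.symm k)) x : ℝ)‖ ≤ ‖u (e.symm k)‖ * ‖x‖ := norm_inner_le_norm _ _
        _ ≤ 1 * ‖x‖ := by gcongr; exact hu _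
        _ = ‖x‖ := one_mul _
    · -- ‖x‖ ≤ m/(m-1) ‖I x‖
      by_cases hx : x = 0
      · simp [hx]
      have hxn : (0:ℝ) < ‖x‖ := norm_pos_iff.mpr hx
      set y : EuclideanSpace ℝ (Fin n) := ‖x‖⁻¹ • x with hy
      have hyn : ‖y‖ = 1 := by
        rw [hy, norm_smul, norm_inv, norm_norm, inv_mul_cancel₀ (ne_of_gt hxn)]
      have hsum1 : ∑ k, ‖y k‖ ^ 2 = 1 := by
        have h := EuclideanSpace.norm_eq y
        rw [hyn] at h
        have h2 := congrArg (· ^ 2) h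
        simp only [one_pow] at h2
        rw [Real.sq_sqrt (by positivity : (0:ℝ) ≤ ∑ k, ‖y k‖ ^ 2)] at h2
        exact h2.symm
      have hyabs : ∀ i, |y i| ≤ 1 := by
        intro i
        have hle : ‖y i‖ ^ 2 ≤ ∑ k, ‖y k‖ ^ 2 :=
          Finset.single_le_sum (f := fun k => ‖y k‖ ^ 2) (fun k _ => by positivity)
            (Finset.mem_univ i)
        rw [hsum1, Real.norm_eq_abs] at hle
        nlinarith [abs_nonneg (y i), sq_nonneg (|y i| - 1)]
      have hMR : (0:ℝ) < (M:ℝ) := by exact_mod_cast hM1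
      -- choose the grid index
      have hbound : ∀ i, 0 ≤ round ((M:ℝ) * y i) + (M:ℤ) ∧
          round ((M:ℝ) * y i) + (M:ℤ) < (K:ℤ) := by
        intro i
        have hab := abs_le.mp (hyabs i)
        have h1 : (M:ℝ) * y i ≤ M := by nlinarith
        have h2 : -(M:ℝ) ≤ (M:ℝ) * y i := by nlinarith
        have hub : (round ((M:ℝ) * y i) : ℝ) ≤ (M:ℝ) + 1/2 := by
          calc (round ((M:ℝ) * y i) : ℝ) ≤ (M:ℝ) * y i + 1/2 := round_le_add_half _
            _ ≤ (M:ℝ) + 1/2 := by linarith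
        have hlb : -(M:ℝ) - 1/2 < (round ((M:ℝ) * y i) : ℝ) := by
          calc -(M:ℝ) - 1/2 ≤ (M:ℝ) * y i - 1/2 := by linarith
            _ < _ := sub_half_lt_round _
        have hub' : round ((M:ℝ) * y i) ≤ (M:ℤ) := by
          have h3 : ((round ((M:ℝ) * y i) : ℤ) : ℝ) < (((M:ℤ) + 1 : ℤ) : ℝ) := by
            push_cast; linarith
          exact Int.lt_add_one_iff.mp (by exact_mod_cast h3)
        have hlb' : -(M:ℤ) ≤ round ((M:ℝ) * y i) := by
          have h3 : ((-(M:ℤ) - 1 : ℤ) : ℝ) < ((round ((M:ℝ) * y i) : ℤ) : ℝ) := by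
            push_cast; linarith
          have h4 : (-(M:ℤ) - 1 : ℤ) < round ((M:ℝ) * y i) := by exact_mod_cast h3
          omega
        refine ⟨by omega, ?_⟩
        rw [hKdef]; push_cast; omega
      let jx : Fin n → Fin K := fun i =>
        ⟨(round ((M:ℝ) * y i) + (M:ℤ)).toNat, by
          have := hbound i
          omega⟩
      have hgjx : ∀ i, g jx i = (round ((M:ℝ) * y i) : ℝ) / M := by
        intro i
        have h0 := (hbound i).1
        have h1 : (((round ((M:ℝ) * y i) + (M:ℤ)).toNat : ℕ) : ℝ)
            = (round ((M:ℝ) * y i) : ℝ) + M := by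
          have h2 := congrArg (fun z : ℤ => (z : ℝ)) (Int.toNat_of_nonneg h0)
          push_cast at h2
          exact h2
        simp only [g, jx, h1]
        ring
      -- distance estimate
      have hterm : ∀ i, ‖(y - g jx) i‖ ^ 2 ≤ (1 / (2 * (M:ℝ))) ^ 2 := by
        intro i
        have hsub : (y - g jx) i = y i - g jx i := rfl
        have h2 : |(M:ℝ) * y i - (round ((M:ℝ) * y i) : ℝ)| ≤ 1/2 := abs_sub_round _
        have h1 : |y i - g jx i| ≤ 1 / (2 * (M:ℝ)) := by
          rw [hgjx i]
          have h3 : y i - (round ((M:ℝ) * y i) : ℝ) / M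
              = ((M:ℝ) * y i - (round ((M:ℝ) * y i) : ℝ)) / M := by
            field_simp
          rw [h3, abs_div, abs_of_pos hMR, div_le_div_iff₀ hMR (by positivity)]
          nlinarith
        rw [hsub, Real.norm_eq_abs]
        nlinarith [abs_nonneg (y i - g jx i)]
      have hdist : ‖y - g jx‖ ≤ 1 / (2 * (m:ℝ)) := by
        have hsq : Real.sqrt ((1/(2*(m:ℝ)))^2) = 1/(2*(m:ℝ)) :=
          Real.sqrt_sq (by positivity)
        rw [EuclideanSpace.norm_eq, ← hsq]
        apply Real.sqrt_le_sqrt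
        have hnR : (1:ℝ) ≤ (n:ℝ) := by exact_mod_cast hn
        have hnpos : (0:ℝ) < (n:ℝ) := by linarith
        calc ∑ i, ‖(y - g jx) i‖ ^ 2 ≤ ∑ _i : Fin n, (1 / (2 * (M:ℝ))) ^ 2 :=
              Finset.sum_le_sum fun i _ => hterm i
          _ = (n:ℝ) * (1 / (2 * (M:ℝ))) ^ 2 := by
              rw [Finset.sum_const, Finset.card_univ, Fintype.card_fin, nsmul_eq_mul]
          _ = (1/(2*(m:ℝ)))^2 / n := by
              rw [hMdef]; push_cast; field_simp
          _ ≤ (1/(2*(m:ℝ)))^2 := div_le_self (by positivity) hnR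
      set δ : ℝ := 1 / (2 * (m:ℝ)) with hδ
      have hδpos : 0 < δ := by positivity
      have hδlt : δ ≤ 1/4 := by
        rw [hδ, div_le_div_iff₀ (by positivity) (by norm_num)]
        linarith
      -- inner product estimates
      have hinner1 : (1:ℝ) - δ ≤ inner ℝ (g jx) y := by
        have h1 : (inner ℝ (g jx) y : ℝ) = inner ℝ y y - inner ℝ (y - g jx) y := by
          rw [inner_sub_left]; ring
        have h2 : (inner ℝ y y : ℝ) = 1 := by
          rw [real_inner_self_eq_norm_sq, hyn]; norm_num
        have h3 : (inner ℝ (y - g jx) y : ℝ) ≤ δ := by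
          calc (inner ℝ (y - g jx) y : ℝ) ≤ ‖y - g jx‖ * ‖y‖ := real_inner_le_norm _ _
            _ ≤ δ * 1 := by rw [hyn]; gcongr
            _ = δ := mul_one δ
        rw [h1, h2]; linarith
      have hglow : 1 - δ ≤ ‖g jx‖ := by
        have h : ‖y‖ - ‖y - g jx‖ ≤ ‖y - (y - g jx)‖ := norm_sub_norm_le _ _
        simp only [sub_sub_cancel] at h
        rw [hyn] at h
        linarith
      have hghigh : ‖g jx‖ ≤ 1 + δ := by
        calc ‖g jx‖ = ‖y - (y - g jx)‖ := by rw [sub_sub_cancel]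
          _ ≤ ‖y‖ + ‖y - g jx‖ := norm_sub_le _ _
          _ ≤ 1 + δ := by rw [hyn]; linarith
      have hgne : g jx ≠ 0 := by
        intro h
        rw [h, norm_zero] at hglow
        linarith
      have hgpos : 0 < ‖g jx‖ := lt_of_lt_of_le (by linarith) hglow
      have hinneru : ((m:ℝ) - 1) / m ≤ inner ℝ (u jx) y := by
        have h1 : (inner ℝ (u jx) y : ℝ) = ‖g jx‖⁻¹ * inner ℝ (g jx) y := by
          simp only [u, if_neg hgne, real_inner_smul_left]
        have h2 : (1 - δ)/(1 + δ) ≤ ‖g jx‖⁻¹ * inner ℝ (g jx) y := by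
          have hA : (1+δ)⁻¹ ≤ ‖g jx‖⁻¹ := inv_anti₀ hgpos hghigh
          have hB : (1+δ)⁻¹ * (1-δ) ≤ ‖g jx‖⁻¹ * inner ℝ (g jx) y :=
            mul_le_mul hA hinner1 (by linarith) (by positivity)
          calc (1 - δ)/(1 + δ) = (1+δ)⁻¹ * (1-δ) := by ring
            _ ≤ _ := hB
        have hfrac : ((m:ℝ)-1)/m ≤ (1-δ)/(1+δ) := by
          rw [div_le_div_iff₀ (by linarith) (by positivity)]
          have hkey : δ * (2*(m:ℝ)) = 1 := by
            rw [hδ]; field_simp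
          nlinarith
        linarith [h1, h2, hfrac]
      -- conclude
      have h1 : I x (e jx) = inner ℝ (u jx) x := by rw [hIapp, e.symm_apply_apply]
      have h2 : (inner ℝ (u jx) x : ℝ) = ‖x‖ * inner ℝ (u jx) y := by
        have hxy : (‖x‖ : ℝ) • y = x := by
          rw [hy, smul_smul, mul_inv_cancel₀ (ne_of_gt hxn), one_smul]
        conv_lhs => rw [← hxy]
        rw [real_inner_smul_right]
      have hcoord : ((m:ℝ)-1)/m * ‖x‖ ≤ ‖I x‖ := by
        calc ((m:ℝ)-1)/m * ‖x‖ ≤ (inner ℝ (u jx) y : ℝ) * ‖x‖ :=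
              mul_le_mul_of_nonneg_right hinneru (norm_nonneg x)
          _ = I x (e jx) := by rw [h1, h2]; ring
          _ ≤ |I x (e jx)| := le_abs_self _
          _ = ‖I x (e jx)‖ := (Real.norm_eq_abs _).symm
          _ ≤ ‖I x‖ := norm_le_pi_norm _ _
      have hm1 : (0:ℝ) < (m:ℝ) - 1 := by linarith
      have hmRpos : (0:ℝ) < (m:ℝ) := by linarith
      have hone : ((m:ℝ)/((m:ℝ)-1)) * (((m:ℝ)-1)/(m:ℝ)) = 1 := by
        rw [div_mul_div_comm, mul_comm ((m:ℝ)-1) (m:ℝ),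
          div_self (ne_of_gt (mul_pos hmRpos hm1))]
      calc ‖x‖ = (((m:ℝ)/((m:ℝ)-1)) * (((m:ℝ)-1)/(m:ℝ))) * ‖x‖ := by
            rw [hone, one_mul]
        _ = ((m:ℝ)/((m:ℝ)-1)) * ((((m:ℝ)-1)/(m:ℝ)) * ‖x‖) := by ring
        _ ≤ ((m:ℝ)/((m:ℝ)-1)) * ‖I x‖ :=
            mul_le_mul_of_nonneg_left hcoord (by positivity)
end
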